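/- For all a > 0, σ > 0 and γ ∈ (0, 1/(4σ²)], and all t ≥ 0: −2Φ(−t/(2σγ^{1/2}))(e^{at + 2a²σ²γ} − 1) + 2 e^{2a²σ²γ} sinh(at) Φ(−t/(2σγ^{1/2}) + 2σγ^{1/2}a) ≤ 4 e^{2a²σ²γ} σ² a γ (2π)^{−1/2} e^{(a + 2σγ^{1/2}a)²/2}. -/

import Mathlib

open MeasureTheory

/-- Standard Gaussian density. -/
noncomputable def stdG (g : ℝ) : ℝ :=
  (Real.sqrt (2 * Real.pi))⁻¹ * Real.exp (-g ^ 2 / 2)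

/-- Standard Gaussian cumulative distribution function. -/
noncomputable def Phi (x : ℝ) : ℝ := ∫ u in Set.Iio x, stdG u

lemma stdG_nonneg (g : ℝ) : 0 ≤ stdG g := by
  unfold stdG; positivity

lemma stdG_integrable : Integrable stdG := by
  have h1 : Integrable (fun u : ℝ => Real.exp (-(1/2) * u ^ 2)) :=
    integrable_exp_neg_mul_sq (by norm_num)
  have : stdG = fun u => (Real.sqrt (2 * Real.pi))⁻¹ * Real.exp (-(1/2) * u ^ 2) := by
    funext u; unfold stdG; ring_nf
  rw [this]
  exact h1.const_mul _

lemma Phi_nonneg (x : ℝ) : 0 ≤ Phi x :=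
  setIntegral_nonneg measurableSet_Iio fun u _ => stdG_nonneg u

lemma Phi_eq_Iic (x : ℝ) : Phi x = ∫ u in Set.Iic x, stdG u :=
  setIntegral_congr_set Iio_ae_eq_Iic

/-- Increment bound for the Gaussian CDF. -/
lemma Phi_sub_le (u h : ℝ) (hu : 0 ≤ u) (hh : 0 ≤ h) :
    Phi (-u + h) - Phi (-u) ≤
      h * ((Real.sqrt (2 * Real.pi))⁻¹ * Real.exp (-u ^ 2 / 2 + h * u)) := by
  rw [Phi_eq_Iic, Phi_eq_Iic,
    intervalIntegral.integral_Iic_sub_Iic stdG_integrable.integrableOn stdG_integrable.integrableOn,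
    intervalIntegral.integral_of_le (by linarith)]
  set M : ℝ := (Real.sqrt (2 * Real.pi))⁻¹ * Real.exp (-u ^ 2 / 2 + h * u) with hM
  have hMpos : 0 ≤ M := by positivity
  calc ∫ x in Set.Ioc (-u) (-u + h), stdG x
      ≤ ∫ _ in Set.Ioc (-u) (-u + h), M := by
        apply setIntegral_mono_on stdG_integrable.integrableOn
          (integrableOn_const (by simp [Real.volume_Ioc]))
          measurableSet_Ioc
        intro x hx
        unfold stdG
        rw [hM]
        apply mul_le_mul_of_nonneg_left _ (by positivity)
        apply Real.exp_le_exp.2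
        have h1 : -u < x := hx.1
        have h2 : x ≤ -u + h := hx.2
        nlinarith [sq_nonneg (x + u), mul_nonneg hu (sub_nonneg.2 (by linarith : x + u ≤ h))]
    _ = M * h := by
        rw [setIntegral_const, measureReal_def, Real.volume_Ioc, smul_eq_mul,
          ENNReal.toReal_ofReal (by linarith : (0:ℝ) ≤ -u + h - -u)]
        ring
    _ = h * M := by ring

/-- `sinh (c*x) ≤ c * sinh x` for `0 ≤ c ≤ 1`, `0 ≤ x`. -/
lemma sinh_const_mul_le (c x : ℝ) (hc0 : 0 ≤ c) (hc1 : c ≤ 1) (hx : 0 ≤ x) :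
    Real.sinh (c * x) ≤ c * Real.sinh x := by
  have hd : ∀ y : ℝ, HasDerivAt (fun y => c * Real.sinh y - Real.sinh (c * y))
      (c * Real.cosh y - Real.cosh (c * y) * c) y := by
    intro y
    exact ((Real.hasDerivAt_sinh y).const_mul c).sub
      (by simpa [Function.comp_def] using (Real.hasDerivAt_sinh (c * y)).comp y ((hasDerivAt_id y).const_mul c))
  have hmono : Monotone (fun y => c * Real.sinh y - Real.sinh (c * y)) := by
    apply monotone_of_deriv_nonneg (fun y => (hd y).differentiableAt)
    intro y
    rw [(hd y).deriv]
    have : Real.cosh (c * y) ≤ Real.cosh y := by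
      rw [Real.cosh_le_cosh, abs_mul]
      calc |c| * |y| ≤ 1 * |y| := by
            apply mul_le_mul_of_nonneg_right _ (abs_nonneg y)
            rwa [abs_of_nonneg hc0]
        _ = |y| := one_mul _
    nlinarith
  have := hmono hx
  simpa using this

set_option maxHeartbeats 1000000 in
theorem sinh_cdf_remainder_bound (a σ γ t : ℝ)
    (ha : 0 < a) (hσ : 0 < σ) (hγ : γ ∈ Set.Ioc (0 : ℝ) (1 / (4 * σ ^ 2)))
    (ht : 0 ≤ t) :
    -2 * Phi (-(t / (2 * σ * Real.sqrt γ))) *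
        (Real.exp (a * t + 2 * a ^ 2 * σ ^ 2 * γ) - 1) +
      2 * Real.exp (2 * a ^ 2 * σ ^ 2 * γ) * Real.sinh (a * t) *
        Phi (-(t / (2 * σ * Real.sqrt γ)) + 2 * σ * Real.sqrt γ * a) ≤
    4 * Real.exp (2 * a ^ 2 * σ ^ 2 * γ) * σ ^ 2 * a * γ *
      (Real.sqrt (2 * Real.pi))⁻¹ *
      Real.exp ((a + 2 * σ * Real.sqrt γ * a) ^ 2 / 2) := by
  obtain ⟨hγ0, hγ1⟩ := hγ
  have hsγ : 0 < Real.sqrt γ := Real.sqrt_pos.2 hγ0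
  have hsγ2 : Real.sqrt γ ^ 2 = γ := Real.sq_sqrt hγ0.le
  set c : ℝ := 2 * σ * Real.sqrt γ with hc_def
  have hc : 0 < c := by positivity
  have hc1 : c ≤ 1 := by
    have h1 : Real.sqrt γ ≤ 1 / (2 * σ) := by
      have : (1 : ℝ) / (2 * σ) = Real.sqrt (1 / (4 * σ ^ 2)) := by
        rw [show (1:ℝ) / (4 * σ ^ 2) = (1 / (2 * σ)) ^ 2 by field_simp; ring,
          Real.sqrt_sq (by positivity)]
      rw [this]
      exact Real.sqrt_le_sqrt hγ1
    calc c = 2 * σ * Real.sqrt γ := rfl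
      _ ≤ 2 * σ * (1 / (2 * σ)) := by gcongr
      _ = 1 := by field_simp
  set u : ℝ := t / c with hu_def
  have hu : 0 ≤ u := div_nonneg ht hc.le
  set h : ℝ := c * a with hh_def
  have hh : 0 < h := by positivity
  have hat : a * t = h * u := by
    rw [hh_def, hu_def]; field_simp
  have hexp : 2 * a ^ 2 * σ ^ 2 * γ = h ^ 2 / 2 := by
    have : h ^ 2 = 4 * σ ^ 2 * (Real.sqrt γ ^ 2) * a ^ 2 := by rw [hh_def, hc_def]; ring
    rw [this, hsγ2]; ring
  rw [hexp, hat]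
  set E : ℝ := Real.exp (h ^ 2 / 2) with hE_def
  have hE1 : 1 ≤ E := Real.one_le_exp (by positivity)
  -- Phi values
  set P0 : ℝ := Phi (-u) with hP0
  set P1 : ℝ := Phi (-u + h) with hP1
  have hP0nn : 0 ≤ P0 := Phi_nonneg _
  have hch : 4 * σ ^ 2 * a * γ = c * h := by
    have : c * h = 4 * σ ^ 2 * (Real.sqrt γ ^ 2) * a := by rw [hh_def, hc_def]; ring
    rw [this, hsγ2]; ring
  have hcu : h * u = c * (a * u) := by rw [hh_def]; ring
  clear_value c u h E P0 P1
  -- Term 1 nonpositive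
  have hsinh_le : Real.sinh (h * u) + 1 ≤ Real.exp (h * u) := by
    have := Real.one_le_cosh (h * u)
    rw [Real.sinh_eq, Real.cosh_eq] at *
    nlinarith [Real.exp_pos (-(h*u))]
  have hterm1 : 2 * P0 * (E * Real.sinh (h * u) - E * Real.exp (h * u) + 1) ≤ 0 := by
    have hkey : E * Real.sinh (h * u) - E * Real.exp (h * u) + 1 ≤ 0 := by
      have h2 : E * (Real.sinh (h * u) + 1) ≤ E * Real.exp (h * u) := by
        apply mul_le_mul_of_nonneg_left hsinh_le (by linarith)
      nlinarith
    nlinarith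
  -- Term 2 bound
  have hsinh_nn : 0 ≤ Real.sinh (h * u) := Real.sinh_nonneg_iff.2 (by positivity)
  have hΔ : P1 - P0 ≤ h * ((Real.sqrt (2 * Real.pi))⁻¹ * Real.exp (-u ^ 2 / 2 + h * u)) := by
    rw [hP0, hP1]; exact Phi_sub_le u h hu hh.le
  have hsinh2 : Real.sinh (h * u) ≤ c * Real.sinh (a * u) := by
    rw [hcu]
    exact sinh_const_mul_le c (a * u) hc.le hc1 (by positivity)
  have hbound : Real.sinh (a * u) * Real.exp (-u ^ 2 / 2 + h * u) ≤
      (1 / 2) * Real.exp ((a + h) ^ 2 / 2) := by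
    have h1 : Real.sinh (a * u) ≤ (1 / 2) * Real.exp (a * u) := by
      rw [Real.sinh_eq]
      nlinarith [Real.exp_pos (-(a * u))]
    calc Real.sinh (a * u) * Real.exp (-u ^ 2 / 2 + h * u)
        ≤ (1 / 2) * Real.exp (a * u) * Real.exp (-u ^ 2 / 2 + h * u) := by
          apply mul_le_mul_of_nonneg_right h1 (Real.exp_pos _).le
      _ = (1 / 2) * Real.exp (a * u + (-u ^ 2 / 2 + h * u)) := by
          rw [mul_assoc, ← Real.exp_add]
      _ ≤ (1 / 2) * Real.exp ((a + h) ^ 2 / 2) := by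
          gcongr
          nlinarith [sq_nonneg (u - (a + h))]
  -- Assemble
  have hS : 0 ≤ (Real.sqrt (2 * Real.pi))⁻¹ := by positivity
  have hExp2 : 0 < Real.exp (-u ^ 2 / 2 + h * u) := Real.exp_pos _
  have hterm2 : 2 * E * Real.sinh (h * u) * (P1 - P0) ≤
      c * h * E * (Real.sqrt (2 * Real.pi))⁻¹ * Real.exp ((a + h) ^ 2 / 2) := by
    calc 2 * E * Real.sinh (h * u) * (P1 - P0)
        ≤ 2 * E * Real.sinh (h * u) *
            (h * ((Real.sqrt (2 * Real.pi))⁻¹ * Real.exp (-u ^ 2 / 2 + h * u))) := by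
          apply mul_le_mul_of_nonneg_left hΔ
          positivity
      _ = 2 * E * h * (Real.sqrt (2 * Real.pi))⁻¹ *
            (Real.sinh (h * u) * Real.exp (-u ^ 2 / 2 + h * u)) := by ring
      _ ≤ 2 * E * h * (Real.sqrt (2 * Real.pi))⁻¹ *
            (c * (Real.sinh (a * u) * Real.exp (-u ^ 2 / 2 + h * u))) := by
          apply mul_le_mul_of_nonneg_left _ (by positivity)
          calc Real.sinh (h * u) * Real.exp (-u ^ 2 / 2 + h * u)
              ≤ c * Real.sinh (a * u) * Real.exp (-u ^ 2 / 2 + h * u) := by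
                apply mul_le_mul_of_nonneg_right hsinh2 hExp2.le
            _ = c * (Real.sinh (a * u) * Real.exp (-u ^ 2 / 2 + h * u)) := by ring
      _ ≤ 2 * E * h * (Real.sqrt (2 * Real.pi))⁻¹ *
            (c * ((1 / 2) * Real.exp ((a + h) ^ 2 / 2))) := by
          apply mul_le_mul_of_nonneg_left _ (by positivity)
          exact mul_le_mul_of_nonneg_left hbound hc.le
      _ = c * h * E * (Real.sqrt (2 * Real.pi))⁻¹ * Real.exp ((a + h) ^ 2 / 2) := by ring
  have hExpE : Real.exp (h * u + h ^ 2 / 2) = E * Real.exp (h * u) := by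
    rw [hE_def, ← Real.exp_add]; ring_nf
  calc -2 * P0 * (Real.exp (h * u + h ^ 2 / 2) - 1) +
        2 * E * Real.sinh (h * u) * P1
      = 2 * P0 * (E * Real.sinh (h * u) - E * Real.exp (h * u) + 1) +
          2 * E * Real.sinh (h * u) * (P1 - P0) := by rw [hExpE]; ring
    _ ≤ 0 + c * h * E * (Real.sqrt (2 * Real.pi))⁻¹ * Real.exp ((a + h) ^ 2 / 2) :=
        add_le_add hterm1 hterm2
    _ = 4 * E * σ ^ 2 * a * γ * (Real.sqrt (2 * Real.pi))⁻¹ *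
          Real.exp ((a + h) ^ 2 / 2) := by
        rw [show (4:ℝ) * E * σ ^ 2 * a * γ = (4 * σ ^ 2 * a * γ) * E by ring, hch]; ring
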